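/- arXiv:1303.1415 — 2 statements merged into one kernel-verified Lean document; each statement's English description precedes it below -/
import Mathlib

section
/- Assume E and C satisfy (EC-0), (EC-1), (EC-2), (EC-3) and the hylomorphy condition inf_{u ∈ X} Λ(u) < Λ₀. Let δ₁, δ₂ ∈ (0, δ_∞) with δ₁ < δ₂ and let u_{δ₁}, u_{δ₂} be minimizers of J_{δ₁}, J_{δ₂} respectively. Then: (a) J_{δ₁}(u_{δ₁}) < J_{δ₂}(u_{δ₂}); (b) Φ(u_{δ₁}) ≥ Φ(u_{δ₂}); (c) Λ(u_{δ₁}) ≤ Λ(u_{δ₂}); (d) C(u_{δ₁}) ≥ C(u_{δ₂}). -/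
open Filter Topology

noncomputable section

variable {X : Type*} [NormedAddCommGroup X] [InnerProductSpace ℝ X] [CompleteSpace X]
variable {G : Type*} [Group G]

/-- A sequence converges weakly to `0`. -/
def WeakToZero (w : ℕ → X) : Prop :=
  ∀ f : X →L[ℝ] ℝ, Filter.Tendsto (fun n => f (w n)) atTop (𝓝 0)

/-- A functional `F : X → ℝ` has the splitting property. -/
def SplittingProp (F : X → ℝ) : Prop :=
  ∀ (u : X) (w : ℕ → X), WeakToZero w →
    Filter.Tendsto (fun n => F (u + w n) - F u - F (w n)) atTop (𝓝 0)

/-- A vanishing sequence with respect to the action `ρ` of `G`: bounded, and for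
every sequence `g n` of group elements, `ρ (g n) (u n) ⇀ 0` weakly. -/
def Vanishing (ρ : G → X →L[ℝ] X) (u : ℕ → X) : Prop :=
  (∃ M : ℝ, ∀ n, ‖u n‖ ≤ M) ∧ ∀ g : ℕ → G, WeakToZero (fun n => ρ (g n) (u n))

/-- The hylenic ratio `Λ u = E u / C u`. -/
def Lam (E C : X → ℝ) (u : X) : ℝ := E u / C u

/-- `Λ₀`: the infimum of `liminf Λ(u n)` over all vanishing sequences (with
`C (u n) ≠ 0`). -/
def Lam0 (ρ : G → X →L[ℝ] X) (E C : X → ℝ) : ℝ :=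
  sInf { l : ℝ | ∃ u : ℕ → X, Vanishing ρ u ∧ (∀ n, C (u n) ≠ 0) ∧
    l = Filter.liminf (fun n => Lam E C (u n)) atTop }

/-- A `G`-compact sequence: some subsequence, translated by group elements,
converges strongly. -/
def GCompactSeq (ρ : G → X →L[ℝ] X) (u : ℕ → X) : Prop :=
  ∃ φ : ℕ → ℕ, StrictMono φ ∧ ∃ g : ℕ → G, ∃ x : X,
    Filter.Tendsto (fun k => ρ (g k) (u (φ k))) atTop (𝓝 x)

/-- A functional `J` is `G`-compact if every minimizing sequence (of nonzero
elements, `J` being defined through the hylenic ratio) is `G`-compact. -/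
def GCompactFun (ρ : G → X →L[ℝ] X) (J : X → ℝ) : Prop :=
  ∀ u : ℕ → X, (∀ n, u n ≠ 0) →
    Filter.Tendsto (fun n => J (u n)) atTop (𝓝 (⨅ v : {v : X // v ≠ 0}, J ↑v)) →
    GCompactSeq ρ u

/-- `J_δ u = Λ u + δ Φ u` with `Φ u = E u + 2 a (C u)^s`. -/
def Jdel (E C : X → ℝ) (a s δ : ℝ) (u : X) : ℝ :=
  Lam E C u + δ * (E u + 2 * a * C u ^ s)

/-- `δ_∞ = sup { δ > 0 | ∃ v, J_δ v < Λ₀ }`. -/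
def deltaInfty (ρ : G → X →L[ℝ] X) (E C : X → ℝ) (a s : ℝ) : ℝ :=
  sSup { δ : ℝ | 0 < δ ∧ ∃ v : X, v ≠ 0 ∧ Jdel E C a s δ v < Lam0 ρ E C }


set_option maxHeartbeats 1000000 in
/-- **Lemma `MM3`.** Under (EC-0)–(EC-3) and the hylomorphy
condition, if `δ₁ < δ₂` lie in `(0, δ_∞)` and `u₁, u₂` are minimizers of
`J_{δ₁}, J_{δ₂}` respectively, then (a) `J_{δ₁}(u₁) < J_{δ₂}(u₂)`,
(b) `Φ(u₁) ≥ Φ(u₂)`, (c) `Λ(u₁) ≤ Λ(u₂)`, (d) `C(u₁) ≥ C(u₂)`. -/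
theorem minimizers_monotonicity
    (ρ : G → X →L[ℝ] X)
    (hiso : ∀ g x, ‖ρ g x‖ = ‖x‖) (hmul : ∀ g h x, ρ (g * h) x = ρ g (ρ h x))
    (E C : X → ℝ) (a s : ℝ) (ha : 0 < a) (hs : 1 < s)
    -- (EC-0)
    (hE0 : E 0 = 0) (hC0 : C 0 = 0)
    (hE0' : fderiv ℝ E 0 = 0) (hC0' : fderiv ℝ C 0 = 0)
    -- (EC-1)
    (hEinv : ∀ g u, E (ρ g u) = E u) (hCinv : ∀ g u, C (ρ g u) = C u)
    -- (EC-2)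
    (hEsplit : SplittingProp E) (hCsplit : SplittingProp C)
    -- (EC-3)
    (hEC3i : ∀ u : X, u ≠ 0 → 0 < C u ∧ 0 < E u + a * C u ^ s)
    (hEC3ii : Filter.Tendsto (fun u : X => E u + a * C u ^ s)
        (Filter.comap (fun u : X => ‖u‖) atTop) atTop)
    (hEC3iii : ∀ u : ℕ → X, (∃ M : ℝ, ∀ n, ‖u n‖ ≤ M) →
        Filter.Tendsto (fun n => E (u n) + a * C (u n) ^ s) atTop (𝓝 0) →
        Filter.Tendsto u atTop (𝓝 0))
    -- hylomorphy condition : inf Λ < Λ₀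
    (hhylo : ∃ u : X, u ≠ 0 ∧ Lam E C u < Lam0 ρ E C)
    (δ₁ δ₂ : ℝ) (hδ₁ : 0 < δ₁) (hδ₁₂ : δ₁ < δ₂) (hδ₂ : δ₂ < deltaInfty ρ E C a s)
    (u₁ u₂ : X) (hu₁0 : u₁ ≠ 0) (hu₂0 : u₂ ≠ 0)
    (hu₁ : ∀ v : X, v ≠ 0 → Jdel E C a s δ₁ u₁ ≤ Jdel E C a s δ₁ v)
    (hu₂ : ∀ v : X, v ≠ 0 → Jdel E C a s δ₂ u₂ ≤ Jdel E C a s δ₂ v) :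
    Jdel E C a s δ₁ u₁ < Jdel E C a s δ₂ u₂ ∧
    E u₂ + 2 * a * C u₂ ^ s ≤ E u₁ + 2 * a * C u₁ ^ s ∧
    Lam E C u₁ ≤ Lam E C u₂ ∧
    C u₂ ≤ C u₁ := by
  obtain ⟨hC1, hE1⟩ := hEC3i u₁ hu₁0
  obtain ⟨hC2, hE2⟩ := hEC3i u₂ hu₂0
  have hr1 : (0:ℝ) < C u₁ ^ s := Real.rpow_pos_of_pos hC1 s
  have hr2 : (0:ℝ) < C u₂ ^ s := Real.rpow_pos_of_pos hC2 s
  have h12 := hu₁ u₂ hu₂0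
  have h21 := hu₂ u₁ hu₁0
  simp only [Jdel] at h12 h21
  -- Φ(u₂) > 0
  have hΦ2 : 0 < E u₂ + 2 * a * C u₂ ^ s := by
    have h := mul_pos ha hr2
    linarith
  have ha' : Jdel E C a s δ₁ u₁ < Jdel E C a s δ₂ u₂ := by
    simp only [Jdel]
    have h := mul_lt_mul_of_pos_right hδ₁₂ hΦ2
    linarith
  have hb : E u₂ + 2 * a * C u₂ ^ s ≤ E u₁ + 2 * a * C u₁ ^ s := by
    by_contra h
    push_neg at h
    have h2 := mul_lt_mul_of_pos_right hδ₁₂ (by linarith :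
      (0:ℝ) < (E u₂ + 2 * a * C u₂ ^ s) - (E u₁ + 2 * a * C u₁ ^ s))
    rw [mul_sub, mul_sub] at h2
    linarith
  have hc : Lam E C u₁ ≤ Lam E C u₂ := by
    have h := mul_le_mul_of_nonneg_left hb hδ₁.le
    linarith
  refine ⟨ha', hb, hc, ?_⟩
  by_contra hd
  push_neg at hd
  set L1 := Lam E C u₁ with hL1
  have hE1eq : E u₁ = L1 * C u₁ := by
    rw [hL1, Lam, div_mul_cancel₀ _ hC1.ne']
  have hE2ge : L1 * C u₂ ≤ E u₂ := by
    have h : L1 ≤ E u₂ / C u₂ := hc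
    calc L1 * C u₂ ≤ (E u₂ / C u₂) * C u₂ := mul_le_mul_of_nonneg_right h hC2.le
    _ = E u₂ := by field_simp
  have h1 : C u₁ ^ s = C u₁ ^ (s - 1) * C u₁ := by
    have h := Real.rpow_add_one hC1.ne' (s - 1)
    rw [show s - 1 + 1 = s by ring] at h
    exact h
  have h2 : C u₂ ^ s = C u₂ ^ (s - 1) * C u₂ := by
    have h := Real.rpow_add_one hC2.ne' (s - 1)
    rw [show s - 1 + 1 = s by ring] at h
    exact h
  have hmono : C u₁ ^ (s - 1) < C u₂ ^ (s - 1) :=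
    Real.rpow_lt_rpow hC1.le hd (by linarith)
  have hss : C u₁ ^ s < C u₂ ^ s :=
    Real.rpow_lt_rpow hC1.le hd (by linarith)
  -- L1 > -a * C u₁ ^ (s-1)
  have hL1lb : -(a * C u₁ ^ (s - 1)) < L1 := by
    rw [← mul_lt_mul_iff_left₀ hC1]
    have heq : -(a * C u₁ ^ (s - 1)) * C u₁ = -(a * C u₁ ^ s) := by
      rw [h1]; ring
    rw [heq]
    linarith
  -- L1 * (C u₂ - C u₁) ≤ 2a (C u₁ ^ s - C u₂ ^ s)
  have hkey : L1 * (C u₂ - C u₁) ≤ 2 * a * (C u₁ ^ s - C u₂ ^ s) := by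
    have : L1 * (C u₂ - C u₁) = L1 * C u₂ - L1 * C u₁ := by ring
    rw [this, mul_sub]
    linarith
  have fact1 := mul_lt_mul_of_pos_right hL1lb
    (by linarith : (0:ℝ) < C u₂ - C u₁)
  have fact2 := mul_lt_mul_of_pos_left (mul_lt_mul_of_pos_right hmono hC2) ha
  have h1a : a * (C u₁ ^ (s - 1) * C u₁) = a * C u₁ ^ s := by rw [← h1]
  have h2a : a * (C u₂ ^ (s - 1) * C u₂) = a * C u₂ ^ s := by rw [← h2]
  have ahss := mul_lt_mul_of_pos_left hss ha
  nlinarith [fact1, hkey, h1a, h2a, fact2, ahss]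
end
end

section
/- Assume E and C are Fréchet differentiable, satisfy (EC-0), (EC-1), (EC-2), (EC-3), the hylomorphy condition inf_{u ∈ X} Λ(u) < Λ₀, and the nondegeneracy condition: E'(u) = 0 and C'(u) = 0 together imply u = 0. Let δ₁, δ₂ ∈ (0, δ_∞) with δ₁ < δ₂ and let u_{δ₁}, u_{δ₂} be nonzero minimizers of J_{δ₁}, J_{δ₂} respectively. Then: (a) Φ(u_{δ₁}) > Φ(u_{δ₂}); (b) Λ(u_{δ₁}) < Λ(u_{δ₂}); (c) C(u_{δ₁}) > C(u_{δ₂}). -/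
open Filter Topology

noncomputable section

variable {X : Type*} [NormedAddCommGroup X] [InnerProductSpace ℝ X] [CompleteSpace X]
variable {G : Type*} [Group G]

set_option maxHeartbeats 4000000 in
/-- **Lemma `BB3`.** Under (EC-0)–(EC-3), the hylomorphy condition
and the nondegeneracy condition (`E'(u) = 0` and `C'(u) = 0` imply `u = 0`), if
`δ₁ < δ₂` lie in `(0, δ_∞)` and `u₁, u₂` are nonzero minimizers of
`J_{δ₁}, J_{δ₂}` respectively, then (a) `Φ(u₁) > Φ(u₂)`, (b) `Λ(u₁) < Λ(u₂)`,
(c) `C(u₁) > C(u₂)`. -/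
theorem minimizers_strict_monotonicity
    (ρ : G → X →L[ℝ] X)
    (hiso : ∀ g x, ‖ρ g x‖ = ‖x‖) (hmul : ∀ g h x, ρ (g * h) x = ρ g (ρ h x))
    (E C : X → ℝ) (a s : ℝ) (ha : 0 < a) (hs : 1 < s)
    (hEdiff : Differentiable ℝ E) (hCdiff : Differentiable ℝ C)
    -- (EC-0)
    (hE0 : E 0 = 0) (hC0 : C 0 = 0)
    (hE0' : fderiv ℝ E 0 = 0) (hC0' : fderiv ℝ C 0 = 0)
    -- (EC-1)
    (hEinv : ∀ g u, E (ρ g u) = E u) (hCinv : ∀ g u, C (ρ g u) = C u)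
    -- (EC-2)
    (hEsplit : SplittingProp E) (hCsplit : SplittingProp C)
    -- (EC-3)
    (hEC3i : ∀ u : X, u ≠ 0 → 0 < C u ∧ 0 < E u + a * C u ^ s)
    (hEC3ii : Filter.Tendsto (fun u : X => E u + a * C u ^ s)
        (Filter.comap (fun u : X => ‖u‖) atTop) atTop)
    (hEC3iii : ∀ u : ℕ → X, (∃ M : ℝ, ∀ n, ‖u n‖ ≤ M) →
        Filter.Tendsto (fun n => E (u n) + a * C (u n) ^ s) atTop (𝓝 0) →
        Filter.Tendsto u atTop (𝓝 0))
    -- hylomorphy condition : inf Λ < Λ₀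
    (hhylo : ∃ u : X, u ≠ 0 ∧ Lam E C u < Lam0 ρ E C)
    -- nondegeneracy
    (hnondeg : ∀ u : X, fderiv ℝ E u = 0 → fderiv ℝ C u = 0 → u = 0)
    (δ₁ δ₂ : ℝ) (hδ₁ : 0 < δ₁) (hδ₁₂ : δ₁ < δ₂) (hδ₂ : δ₂ < deltaInfty ρ E C a s)
    (u₁ u₂ : X) (hu₁0 : u₁ ≠ 0) (hu₂0 : u₂ ≠ 0)
    (hu₁ : ∀ v : X, v ≠ 0 → Jdel E C a s δ₁ u₁ ≤ Jdel E C a s δ₁ v)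
    (hu₂ : ∀ v : X, v ≠ 0 → Jdel E C a s δ₂ u₂ ≤ Jdel E C a s δ₂ v) :
    E u₂ + 2 * a * C u₂ ^ s < E u₁ + 2 * a * C u₁ ^ s ∧
    Lam E C u₁ < Lam E C u₂ ∧
    C u₂ < C u₁ := by
  classical
  have hC₁ : 0 < C u₁ := (hEC3i u₁ hu₁0).1
  have hC₂ : 0 < C u₂ := (hEC3i u₂ hu₂0).1
  have h12 := hu₁ u₂ hu₂0
  have h21 := hu₂ u₁ hu₁0
  simp only [Jdel] at h12 h21
  -- Part (a), weak version
  have hPhile : E u₂ + 2 * a * C u₂ ^ s ≤ E u₁ + 2 * a * C u₁ ^ s := by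
    by_contra hcon
    push_neg at hcon
    nlinarith [mul_lt_mul_of_pos_left hcon (sub_pos.mpr hδ₁₂)]
  -- Part (a), strict version
  have hPhi : E u₂ + 2 * a * C u₂ ^ s < E u₁ + 2 * a * C u₁ ^ s := by
    rcases lt_or_eq_of_le hPhile with h | h
    · exact h
    exfalso
    have hΛeq : Lam E C u₁ = Lam E C u₂ := by
      have h1 : δ₁ * (E u₂ + 2 * a * C u₂ ^ s) = δ₁ * (E u₁ + 2 * a * C u₁ ^ s) := by rw [h]
      have h2 : δ₂ * (E u₂ + 2 * a * C u₂ ^ s) = δ₂ * (E u₁ + 2 * a * C u₁ ^ s) := by rw [h]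
      apply le_antisymm <;> linarith
    have hmin2 : ∀ v : X, v ≠ 0 → Jdel E C a s δ₂ u₁ ≤ Jdel E C a s δ₂ v := by
      intro v hv
      have hv2 := hu₂ v hv
      simp only [Jdel] at hv2 ⊢
      have h2 : δ₂ * (E u₂ + 2 * a * C u₂ ^ s) = δ₂ * (E u₁ + 2 * a * C u₁ ^ s) := by rw [h]
      linarith
    have hE' : HasFDerivAt E (fderiv ℝ E u₁) u₁ := (hEdiff u₁).hasFDerivAt
    have hC' : HasFDerivAt C (fderiv ℝ C u₁) u₁ := (hCdiff u₁).hasFDerivAt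
    set DE := fderiv ℝ E u₁ with hDEdef
    set DC := fderiv ℝ C u₁ with hDCdef
    set A : X →L[ℝ] ℝ := E u₁ • ((-(C u₁ ^ 2)⁻¹) • DC) + (C u₁)⁻¹ • DE with hAdef
    set B : X →L[ℝ] ℝ := DE + (2 * a) • ((s * C u₁ ^ (s - 1)) • DC) with hBdef
    have key : ∀ δ : ℝ, (∀ v : X, v ≠ 0 → Jdel E C a s δ u₁ ≤ Jdel E C a s δ v) →
        A + δ • B = 0 := by
      intro δ hmin
      have hLam : HasFDerivAt (fun u => E u / C u) A u₁ := by
        rw [hAdef]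
        simpa [div_eq_mul_inv, Pi.mul_def, Function.comp_def] using
          hE'.mul ((hasDerivAt_inv hC₁.ne').comp_hasFDerivAt u₁ hC')
      have hPhiD : HasFDerivAt (fun u => δ * (E u + 2 * a * C u ^ s)) (δ • B) u₁ := by
        rw [hBdef]
        exact (hE'.add ((hC'.rpow_const (Or.inl hC₁.ne')).const_mul (2 * a))).const_mul δ
      have hJ : HasFDerivAt (fun u => Jdel E C a s δ u) (A + δ • B) u₁ := by
        simpa only [Jdel, Lam, Pi.add_def] using hLam.add hPhiD
      have hloc : IsLocalMin (fun u => Jdel E C a s δ u) u₁ :=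
        Filter.eventually_of_mem (isOpen_ne.mem_nhds hu₁0) fun v hv => hmin v hv
      exact hloc.hasFDerivAt_eq_zero hJ
    have eq1 := key δ₁ hu₁
    have eq2 := key δ₂ hmin2
    have hBzero : B = 0 := by
      have hsub : (δ₂ - δ₁) • B = 0 := by
        calc (δ₂ - δ₁) • B = (A + δ₂ • B) - (A + δ₁ • B) := by rw [show (δ₂ - δ₁) • B = δ₂ • B - δ₁ • B from sub_smul δ₂ δ₁ B]; abel
          _ = 0 := by rw [eq1, eq2, sub_zero]
      have hne : δ₂ - δ₁ ≠ 0 := sub_ne_zero.mpr hδ₁₂.ne'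
      calc B = (δ₂ - δ₁)⁻¹ • ((δ₂ - δ₁) • B) := by
            rw [smul_smul, inv_mul_cancel₀ hne, one_smul]
        _ = 0 := by rw [hsub, smul_zero]
    have hAzero : A = 0 := by
      have h0 := eq1
      rw [hBzero, smul_zero, add_zero] at h0
      exact h0
    rw [hBdef] at hBzero
    rw [hAdef] at hAzero
    have hDE : DE = (-(2 * a * (s * C u₁ ^ (s - 1)))) • DC := by
      have h1 : DE + (2 * a * (s * C u₁ ^ (s - 1))) • DC = 0 := by
        rw [mul_smul]; exact hBzero
      rw [eq_neg_of_add_eq_zero_left h1, neg_smul]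
    have hA' : (E u₁ * (-(C u₁ ^ 2)⁻¹) + (C u₁)⁻¹ * (-(2 * a * (s * C u₁ ^ (s - 1))))) • DC
        = 0 := by
      rw [add_smul, mul_smul, mul_smul, ← hDE]
      exact hAzero
    have hk1 : 0 < C u₁ ^ (s - 1) := Real.rpow_pos_of_pos hC₁ _
    have hcs1 : C u₁ ^ s = C u₁ ^ (s - 1) * C u₁ := by
      have h0 := Real.rpow_add hC₁ (s - 1) 1
      rw [sub_add_cancel, Real.rpow_one] at h0
      exact h0
    have hEpos : 0 < E u₁ + a * C u₁ ^ s := (hEC3i u₁ hu₁0).2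
    have hnum : 0 < E u₁ + 2 * a * (s * C u₁ ^ (s - 1)) * C u₁ := by
      nlinarith [mul_pos (mul_pos ha (sub_pos.mpr hs)) (mul_pos hk1 hC₁), hcs1, hEpos,
        mul_pos hk1 hC₁]
    have hcoef : E u₁ * (-(C u₁ ^ 2)⁻¹) + (C u₁)⁻¹ * (-(2 * a * (s * C u₁ ^ (s - 1)))) ≠ 0 := by
      have hc2 : (0 : ℝ) < C u₁ ^ 2 := by positivity
      have heq : E u₁ * (-(C u₁ ^ 2)⁻¹) + (C u₁)⁻¹ * (-(2 * a * (s * C u₁ ^ (s - 1))))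
          = -((E u₁ + 2 * a * (s * C u₁ ^ (s - 1)) * C u₁) / C u₁ ^ 2) := by
        field_simp
        ring
      rw [heq]
      exact neg_ne_zero.mpr (ne_of_gt (div_pos hnum hc2))
    have hDC0 : DC = 0 := by
      set β := E u₁ * (-(C u₁ ^ 2)⁻¹) + (C u₁)⁻¹ * (-(2 * a * (s * C u₁ ^ (s - 1)))) with hβ
      calc DC = β⁻¹ • (β • DC) := by rw [smul_smul, inv_mul_cancel₀ hcoef, one_smul]
        _ = 0 := by rw [hA', smul_zero]
    have hDE0 : DE = 0 := by rw [hDE, hDC0, smul_zero]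
    rw [hDEdef] at hDE0
    rw [hDCdef] at hDC0
    exact hu₁0 (hnondeg u₁ hDE0 hDC0)
  -- Part (b)
  have hb : Lam E C u₁ < Lam E C u₂ := by
    nlinarith [mul_lt_mul_of_pos_left hPhi hδ₁]
  -- Part (c)
  refine ⟨hPhi, hb, ?_⟩
  by_contra hcon
  push_neg at hcon
  have hk2 : 0 < C u₂ ^ (s - 1) := Real.rpow_pos_of_pos hC₂ _
  have hcs2 : C u₂ ^ s = C u₂ ^ (s - 1) * C u₂ := by
    have h0 := Real.rpow_add hC₂ (s - 1) 1
    rw [sub_add_cancel, Real.rpow_one] at h0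
    exact h0
  have hcs1le : C u₁ ^ s ≤ C u₂ ^ (s - 1) * C u₁ := by
    have h1 : C u₁ ^ (s - 1) ≤ C u₂ ^ (s - 1) :=
      Real.rpow_le_rpow hC₁.le hcon (by linarith)
    have hcs1 : C u₁ ^ s = C u₁ ^ (s - 1) * C u₁ := by
      have h0 := Real.rpow_add hC₁ (s - 1) 1
      rw [sub_add_cancel, Real.rpow_one] at h0
      exact h0
    rw [hcs1]
    exact mul_le_mul_of_nonneg_right h1 hC₁.le
  have hE1 : Lam E C u₁ * C u₁ = E u₁ := div_mul_cancel₀ _ hC₁.ne'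
  have hE2 : Lam E C u₂ * C u₂ = E u₂ := div_mul_cancel₀ _ hC₂.ne'
  have hΛ2 : -(a * C u₂ ^ (s - 1)) < Lam E C u₂ := by
    have h1 : 0 < E u₂ + a * C u₂ ^ s := (hEC3i u₂ hu₂0).2
    have hprod : 0 < (Lam E C u₂ + a * C u₂ ^ (s - 1)) * C u₂ := by
      have heq : (Lam E C u₂ + a * C u₂ ^ (s - 1)) * C u₂ = E u₂ + a * C u₂ ^ s := by
        rw [add_mul, hE2, hcs2]; ring
      rw [heq]; exact h1
    nlinarith [hC₂]
  nlinarith [mul_lt_mul_of_pos_right hb hC₁,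
    mul_le_mul_of_nonneg_right hΛ2.le (sub_nonneg.mpr hcon),
    mul_nonneg (mul_nonneg ha.le hk2.le) (sub_nonneg.mpr hcon),
    mul_le_mul_of_nonneg_left hcs1le (by positivity : (0:ℝ) ≤ 2 * a),
    hE1, hE2, hcs2, hPhi]


end
end
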